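/- For integers m ≥ 1 and n ≥ 2, let A be a complete DFA with m states whose unique final state equals its initial state, and let B be a complete DFA with n states. Then there exists a complete DFA with at most m·(2^n − 1) − 2^(n−1) + 1 states accepting L(A)·L(B), which equals L(A)*·L(B). -/

import Mathlib

open Computability

/-- Upper bound m·(2^n − 1) − 2^(n−1) + 1 for catenation when the first DFA's unique final
    state is its initial state (so that L(A)* = L(A)). -/
theorem starcat_upper_special
    (m n : ℕ) (hm : 1 ≤ m) (hn : 2 ≤ n)
    (α σ₁ σ₂ : Type) [Fintype σ₁] [Fintype σ₂]
    (A : DFA α σ₁) (B : DFA α σ₂)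
    (hcm : Fintype.card σ₁ = m) (hcn : Fintype.card σ₂ = n)
    (hF : A.accept = {A.start}) :
    A.accepts * B.accepts = (A.accepts)∗ * B.accepts ∧
    ∃ (σ : Type) (inst : Fintype σ) (C : DFA α σ),
      C.accepts = A.accepts * B.accepts ∧
      @Fintype.card σ inst ≤ m * (2 ^ n - 1) - 2 ^ (n - 1) + 1 := by
  classical
  have hmemA : ∀ x : List α, x ∈ A.accepts ↔ A.eval x = A.start := by
    intro x; rw [DFA.mem_accepts, hF]; exact Set.mem_singleton_iff
  have hεA : ([] : List α) ∈ A.accepts := by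
    rw [hmemA]; rfl
  have hcat : ∀ x y : List α, x ∈ A.accepts → y ∈ A.accepts → x ++ y ∈ A.accepts := by
    intro x y hx hy
    rw [hmemA] at hx hy ⊢
    show A.evalFrom A.start (x ++ y) = A.start
    rw [DFA.evalFrom_of_append]
    have hx' : A.evalFrom A.start x = A.start := hx
    rw [hx']
    exact hy
  have hstar : (A.accepts)∗ = A.accepts := by
    apply le_antisymm
    · intro x hx
      replace hx := Language.mem_kstar.mp hx
      obtain ⟨L, rfl, hL⟩ := hx
      induction L with
      | nil => exact hεA
      | cons a L ih =>
        rw [List.flatten_cons]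
        exact hcat _ _ (hL a (by simp)) (ih fun y hy => hL y (by simp [hy]))
    · exact le_kstar
  refine ⟨by rw [hstar], ?_⟩
  -- the construction
  set P : σ₁ × Set σ₂ → Prop :=
    fun p => p.2.Nonempty ∧ (p.1 ∈ A.accept → B.start ∈ p.2) with hPdef
  let C : DFA α {p : σ₁ × Set σ₂ // P p} :=
    { step := fun p a =>
        ⟨(A.step p.1.1 a,
          {t | (∃ s ∈ p.1.2, B.step s a = t) ∨ (A.step p.1.1 a ∈ A.accept ∧ t = B.start)}),
         by
          obtain ⟨s, hs⟩ := p.2.1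
          exact ⟨⟨B.step s a, Or.inl ⟨s, hs, rfl⟩⟩, fun h => Or.inr ⟨h, rfl⟩⟩⟩
      start := ⟨(A.start, {B.start}), ⟨⟨B.start, rfl⟩, fun _ => rfl⟩⟩
      accept := {p | ∃ t ∈ p.1.2, t ∈ B.accept} }
  have key : ∀ x : List α, (C.eval x).1 =
      (A.eval x, {t | ∃ y z : List α, y ++ z = x ∧ y ∈ A.accepts ∧ B.eval z = t}) := by
    intro x
    induction x using List.reverseRecOn with
    | nil =>
      show ((A.start, ({B.start} : Set σ₂)) : σ₁ × Set σ₂) = _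
      refine Prod.ext rfl ?_
      ext t
      simp only [Set.mem_singleton_iff, Set.mem_setOf_eq]
      constructor
      · rintro rfl
        exact ⟨[], [], rfl, hεA, rfl⟩
      · rintro ⟨y, z, hyz, hy, rfl⟩
        obtain ⟨rfl, rfl⟩ := List.append_eq_nil_iff.mp hyz
        rfl
    | append_singleton x a ih =>
      rw [DFA.eval_append_singleton, DFA.eval_append_singleton]
      show ((A.step (C.eval x).1.1 a,
        {t | (∃ s ∈ (C.eval x).1.2, B.step s a = t) ∨
          (A.step (C.eval x).1.1 a ∈ A.accept ∧ t = B.start)}) : σ₁ × Set σ₂) = _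
      rw [ih]
      refine Prod.ext rfl ?_
      ext t
      simp only [Set.mem_setOf_eq]
      constructor
      · rintro (⟨s, ⟨y, z, rfl, hy, rfl⟩, rfl⟩ | ⟨hacc, rfl⟩)
        · exact ⟨y, z ++ [a], by simp, hy, (B.eval_append_singleton z a)⟩
        · refine ⟨x ++ [a], [], by simp, ?_, rfl⟩
          rw [DFA.mem_accepts, DFA.eval_append_singleton]
          exact hacc
      · rintro ⟨y, z, hyz, hy, rfl⟩
        rcases List.eq_nil_or_concat z with rfl | ⟨z', b, rfl⟩
        · rw [List.append_nil] at hyz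
          subst hyz
          right
          refine ⟨?_, rfl⟩
          rw [DFA.mem_accepts, DFA.eval_append_singleton] at hy
          exact hy
        · rw [List.concat_eq_append] at hyz ⊢
          rw [← List.append_assoc] at hyz
          obtain ⟨h1, h2⟩ := List.append_inj' hyz rfl
          obtain rfl : b = a := by simpa using h2
          left
          exact ⟨B.eval z', ⟨y, z', h1, hy, rfl⟩, (B.eval_append_singleton z' _).symm⟩
  have haccC : C.accepts = A.accepts * B.accepts := by
    ext x
    rw [DFA.mem_accepts, Language.mem_mul]
    have h2 : (C.eval x).1.2 = {t | ∃ y z : List α, y ++ z = x ∧ y ∈ A.accepts ∧ B.eval z = t} :=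
      congrArg Prod.snd (key x)
    show (∃ t ∈ (C.eval x).1.2, t ∈ B.accept) ↔ _
    rw [h2]
    constructor
    · rintro ⟨t, ⟨y, z, rfl, hy, rfl⟩, ht⟩
      exact ⟨y, hy, z, ht, rfl⟩
    · rintro ⟨y, hy, z, hz, rfl⟩
      exact ⟨B.eval z, ⟨y, z, rfl, hy, rfl⟩, hz⟩
  refine ⟨{p : σ₁ × Set σ₂ // P p}, inferInstance, C, haccC, ?_⟩
  -- cardinality bound via injection
  have hBA : A.start ∈ A.accept := by rw [hF]; rfl
  let f : {p : σ₁ × Set σ₂ // P p} →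
      ({q : σ₁ // ¬ q = A.start} × {T : Set σ₂ // ¬ T = ∅}) ⊕ Set {x : σ₂ // ¬ x = B.start} :=
    fun p =>
      if h : p.1.1 = A.start then Sum.inr {x | (x : σ₂) ∈ p.1.2}
      else Sum.inl (⟨p.1.1, h⟩, ⟨p.1.2, p.2.1.ne_empty⟩)
  have hf : Function.Injective f := by
    intro p q hpq
    simp only [f] at hpq
    rcases Decidable.em ((p : σ₁ × Set σ₂).1 = A.start) with h1 | h1 <;>
      rcases Decidable.em ((q : σ₁ × Set σ₂).1 = A.start) with h2 | h2
    · rw [dif_pos h1, dif_pos h2] at hpq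
      have hBp : B.start ∈ (p : σ₁ × Set σ₂).2 := p.2.2 (h1 ▸ hBA)
      have hBq : B.start ∈ (q : σ₁ × Set σ₂).2 := q.2.2 (h2 ▸ hBA)
      have hsets := Sum.inr.inj hpq
      apply Subtype.ext
      refine Prod.ext (h1.trans h2.symm) ?_
      ext t
      by_cases ht : t = B.start
      · subst ht; simp [hBp, hBq]
      · have := Set.ext_iff.mp hsets ⟨t, ht⟩
        simpa using this
    · rw [dif_pos h1, dif_neg h2] at hpq
      exact absurd hpq (by simp)
    · rw [dif_neg h1, dif_pos h2] at hpq
      exact absurd hpq (by simp)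
    · rw [dif_neg h1, dif_neg h2] at hpq
      have h := Sum.inl.inj hpq
      have ha : (p : σ₁ × Set σ₂).1 = (q : σ₁ × Set σ₂).1 :=
        Subtype.ext_iff.mp (congrArg Prod.fst h)
      have hb : (p : σ₁ × Set σ₂).2 = (q : σ₁ × Set σ₂).2 :=
        Subtype.ext_iff.mp (congrArg Prod.snd h)
      exact Subtype.ext (Prod.ext ha hb)
  have hle := Fintype.card_le_of_injective f hf
  have c1 : Fintype.card {q : σ₁ // ¬ q = A.start} = m - 1 := by
    rw [Fintype.card_subtype_compl, Fintype.card_subtype_eq, hcm]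
  have c2 : Fintype.card {T : Set σ₂ // ¬ T = ∅} = 2 ^ n - 1 := by
    rw [Fintype.card_subtype_compl, Fintype.card_subtype_eq, Fintype.card_set, hcn]
  have c3 : Fintype.card (Set {x : σ₂ // ¬ x = B.start}) = 2 ^ (n - 1) := by
    rw [Fintype.card_set, Fintype.card_subtype_compl, Fintype.card_subtype_eq, hcn]
  rw [Fintype.card_sum, Fintype.card_prod, c1, c2, c3] at hle
  refine hle.trans ?_
  have h2n : 2 ^ n = 2 * 2 ^ (n - 1) := by
    rw [← pow_succ']
    congr 1
    omega
  have hX : (2:ℕ) ≤ 2 ^ (n - 1) := by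
    calc (2:ℕ) = 2 ^ 1 := rfl
    _ ≤ 2 ^ (n-1) := Nat.pow_le_pow_right (by norm_num) (by omega)
  rw [h2n]
  generalize 2 ^ (n - 1) = X at hX ⊢
  obtain ⟨m', rfl⟩ : ∃ m', m = m' + 1 := ⟨m - 1, by omega⟩
  simp only [Nat.add_sub_cancel, add_mul, one_mul]
  generalize m' * (2 * X - 1) = t
  omega
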